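/- Let (W,R,V,w) be a pointed model with R reflexive, and let Unr^re_w(M) be the reflexive unravelling of M from w (worlds are finite R-paths starting at w, the relation is the reflexive closure of the one-step extension relation, and a path is in V'(p) iff its last element is in V(p)). Then for every formula φ and every path (s_0,...,s_n), Unr^re_w(M),(s_0,...,s_n) ⊨ φ iff M,s_n ⊨ φ. Moreover the reflexive unravelling is a reflexive interpretation: for every p, R*[V'(p)] ∩ R*^□(R*[V'(p)]) ⊆ V'(p). -/

import Mathlib

def RImg {W : Type*} (R : W → W → Prop) (X : Set W) : Set W := {t | ∃ s ∈ X, R s t}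
def RBox {W : Type*} (R : W → W → Prop) (X : Set W) : Set W := {s | ∀ t, R s t → t ∈ X}
def RDia {W : Type*} (R : W → W → Prop) (X : Set W) : Set W := (RBox R Xᶜ)ᶜ
def IsProposition {W : Type*} (R : W → W → Prop) (X : Set W) : Prop :=
  RImg R X ∩ RBox R (RImg R X) ⊆ X

inductive Form where
  | var : ℕ → Form
  | bot : Form
  | and : Form → Form → Form
  | imp : Form → Form → Form

def Sat {W : Type*} (R : W → W → Prop) (V : ℕ → Set W) : W → Form → Prop
  | s, .var p => s ∈ V p
  | _, .bot => False
  | s, .and φ ψ => Sat R V s φ ∧ Sat R V s ψ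
  | s, .imp φ ψ => ∀ t, R s t → Sat R V t φ → Sat R V t ψ

/-- Worlds of the unravelling: nonempty reversed R-paths starting (originally) at w.
The list is stored in reverse, so its head is the last element of the path and its
last element is w; `List.Chain' (fun a b => R b a)` expresses that consecutive
elements of the original path are R-related. -/
def UnrWorld {W : Type*} (R : W → W → Prop) (w : W) : Type _ :=
  {l : List W // ∃ h : l ≠ [], l.getLast h = w ∧ List.Chain' (fun a b => R b a) l}

/-- One-step extension relation R' of the unravelling. -/
def UnrRel {W : Type*} (R : W → W → Prop) (w : W)
    (p q : UnrWorld R w) : Prop := ∃ x, q.val = x :: p.val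

/-- Reflexive closure R* of R'. -/
def UnrRelRefl {W : Type*} (R : W → W → Prop) (w : W)
    (p q : UnrWorld R w) : Prop := p = q ∨ UnrRel R w p q

/-- Valuation of the unravelling: a path is in V'(n) iff its last element (the head
of the reversed list) is in V(n). -/
def UnrVal {W : Type*} (R : W → W → Prop) (w : W) (V : ℕ → Set W)
    (n : ℕ) : Set (UnrWorld R w) := {l | ∃ x ∈ V n, l.val.head? = some x}

lemma unr_ext {W : Type*} {R : W → W → Prop} {w : W} (l : UnrWorld R w) {x t : W}
    (hx : l.val.head? = some x) (ht : R x t) :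
    ∃ q : UnrWorld R w, q.val = t :: l.val := by
  obtain ⟨hne, hlast, hch⟩ := l.2
  refine ⟨⟨t :: l.val, ?_, ?_, ?_⟩, rfl⟩
  · simp
  · rw [List.getLast_cons hne]; exact hlast
  · rw [List.Chain', List.isChain_cons]
    exact ⟨fun y hy => by rw [hx] at hy; simp_all, hch⟩

lemma unr_succ_head {W : Type*} {R : W → W → Prop} {w : W} {l q : UnrWorld R w} {x : W}
    (hx : l.val.head? = some x) (h : UnrRel R w l q) :
    ∃ y, q.val.head? = some y ∧ R x y := by
  obtain ⟨y, hy⟩ := h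
  obtain ⟨hne, hlast, hch⟩ := q.2
  rw [hy, List.Chain', List.isChain_cons] at hch
  refine ⟨y, by rw [hy]; rfl, hch.1 x hx⟩

theorem stmt_19 {W : Type*} (R : W → W → Prop) (V : ℕ → Set W) (w : W)
    (hR : Reflexive R) :
    (∀ (φ : Form) (l : UnrWorld R w) (x : W), l.val.head? = some x →
      (Sat (UnrRelRefl R w) (UnrVal R w V) l φ ↔ Sat R V x φ)) ∧
    (∀ n, IsProposition (UnrRelRefl R w) (UnrVal R w V n)) := by
  have main : ∀ (φ : Form) (l : UnrWorld R w) (x : W), l.val.head? = some x →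
      (Sat (UnrRelRefl R w) (UnrVal R w V) l φ ↔ Sat R V x φ) := by
    intro φ
    induction φ with
    | var p =>
      intro l x hx
      simp only [Sat, UnrVal, Set.mem_setOf_eq]
      constructor
      · rintro ⟨y, hy, hxy⟩; rw [hx] at hxy; injection hxy with h; exact h ▸ hy
      · intro h; exact ⟨x, h, hx⟩
    | bot => intro l x hx; simp [Sat]
    | and φ ψ ihφ ihψ =>
      intro l x hx
      simp only [Sat]
      rw [ihφ l x hx, ihψ l x hx]
    | imp φ ψ ihφ ihψ =>
      intro l x hx
      simp only [Sat]
      constructor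
      · intro h t hxt hφ
        obtain ⟨q, hq⟩ := unr_ext l hx hxt
        have hqh : q.val.head? = some t := by rw [hq]; rfl
        have := h q (Or.inr ⟨t, hq⟩) ((ihφ q t hqh).mpr hφ)
        exact (ihψ q t hqh).mp this
      · intro h q hlq hφ
        rcases hlq with rfl | hlq
        · exact (ihψ l x hx).mpr (h x (hR x) ((ihφ l x hx).mp hφ))
        · obtain ⟨y, hyh, hxy⟩ := unr_succ_head hx hlq
          exact (ihψ q y hyh).mpr (h y hxy ((ihφ q y hyh).mp hφ))
  refine ⟨main, ?_⟩
  intro n l ⟨_, hbox⟩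
  obtain ⟨x, hx⟩ : ∃ x, l.val.head? = some x := by
    obtain ⟨hne, _, _⟩ := l.2
    exact ⟨l.val.head hne, List.head?_eq_head hne⟩
  obtain ⟨q, hq⟩ := unr_ext l hx (hR x)
  have hqh : q.val.head? = some x := by rw [hq]; rfl
  obtain ⟨s, hs, hsq⟩ := hbox q (Or.inr ⟨x, hq⟩)
  rcases hsq with rfl | ⟨y, hy⟩
  · obtain ⟨z, hz, hzh⟩ := hs
    rw [hqh] at hzh; injection hzh with h
    exact ⟨x, h ▸ hz, hx⟩
  · rw [hq] at hy; injection hy with _ h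
    have : s = l := Subtype.ext h.symm
    rwa [this] at hs
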